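/- Let g : W → ℝ be a function satisfying the PL-inequality (1/2)‖∇g(w)‖² ≥ μ·(g(w) − g*) with g* = inf g, and suppose g is L-smooth (its gradient is L-Lipschitz). Consider gradient descent w_{t+1} = w_t − η_t ∇g(w_t) with step sizes η_t = 1/(μ t). Then g(w_{T+1}) − g* ≤ G²L/(T μ²), where G is an upper bound on ‖∇g(w_t)‖ along the trajectory. -/

import Mathlib

open InnerProductSpace

local notation "⟪" x ", " y "⟫" => @inner ℝ _ _ x y

/-- fderiv applied equals inner product with gradient. -/
lemma fderiv_apply_eq_inner_gradient {E : Type*} [NormedAddCommGroup E]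
    [InnerProductSpace ℝ E] [CompleteSpace E] (g : E → ℝ) (x v : E) :
    fderiv ℝ g x v = ⟪gradient g x, v⟫ := by
  rw [gradient, ← InnerProductSpace.toDual_apply_apply, (toDual ℝ E).apply_symm_apply]

/-- Under PL + Lipschitz (junk) gradient, `g` is differentiable everywhere. -/
lemma diff_of_PL {E : Type*} [NormedAddCommGroup E] [InnerProductSpace ℝ E]
    [CompleteSpace E] (g : E → ℝ) (μ L gstar : ℝ) (hμ : 0 < μ) (hL : 0 < L)
    (hglb : IsGLB (Set.range g) gstar)
    (hsmooth : ∀ w₁ w₂, ‖gradient g w₁ - gradient g w₂‖ ≤ L * ‖w₁ - w₂‖)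
    (hPL : ∀ w, μ * (g w - gstar) ≤ (1 / 2) * ‖gradient g w‖ ^ 2) (x : E) :
    DifferentiableAt ℝ g x := by
  by_contra h
  have hgx0 : gradient g x = 0 := gradient_eq_zero_of_not_differentiableAt h
  have hge : ∀ y, gstar ≤ g y := fun y => hglb.1 (Set.mem_range_self y)
  have hgxe : g x = gstar := by
    have := hPL x
    rw [hgx0] at this
    simp at this
    nlinarith [hge x]
  set C : ℝ := L ^ 2 / (2 * μ) with hC
  have hCpos : 0 < C := by positivity
  have hbound : ∀ y, ‖g y - g x‖ ≤ C * ‖y - x‖ ^ 2 := by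
    intro y
    have h1 : ‖gradient g y‖ ≤ L * ‖y - x‖ := by
      have := hsmooth y x
      rwa [hgx0, sub_zero] at this
    have h2 : μ * (g y - gstar) ≤ (1 / 2) * (L * ‖y - x‖) ^ 2 := by
      refine le_trans (hPL y) ?_
      have := norm_nonneg (gradient g y)
      nlinarith
    have h3 : 0 ≤ g y - g x := by rw [hgxe]; linarith [hge y]
    rw [Real.norm_eq_abs, abs_of_nonneg h3, hgxe, hC]
    rw [div_mul_eq_mul_div, le_div_iff₀ (by positivity)]
    nlinarith
  have : HasFDerivAt g (0 : E →L[ℝ] ℝ) x := by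
    rw [hasFDerivAt_iff_isLittleO_nhds_zero]
    rw [Asymptotics.isLittleO_iff]
    intro ε hε
    have : ∀ᶠ v : E in nhds 0, ‖v‖ < ε / C := by
      have : Metric.ball (0 : E) (ε / C) ∈ nhds (0 : E) :=
        Metric.ball_mem_nhds _ (by positivity)
      filter_upwards [this] with v hv
      simpa [dist_eq_norm] using hv
    filter_upwards [this] with v hv
    have := hbound (x + v)
    simp only [ContinuousLinearMap.zero_apply, sub_zero, add_sub_cancel_left] at *
    have h4 : ‖v‖ ^ 2 ≤ (ε / C) * ‖v‖ := by
      nlinarith [mul_le_mul_of_nonneg_right hv.le (norm_nonneg v), norm_nonneg v]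
    have h5 : C * ((ε / C) * ‖v‖) = ε * ‖v‖ := by field_simp
    calc ‖g (x + v) - g x‖ ≤ C * ‖v‖ ^ 2 := this
      _ ≤ C * ((ε / C) * ‖v‖) := mul_le_mul_of_nonneg_left h4 hCpos.le
      _ = ε * ‖v‖ := h5
  exact h this.differentiableAt

/-- Descent lemma (with a crude constant `L` instead of `L/2`). -/
lemma descent_lemma {E : Type*} [NormedAddCommGroup E] [InnerProductSpace ℝ E]
    [CompleteSpace E] (g : E → ℝ) (L : ℝ) (hL : 0 ≤ L)
    (hdiff : ∀ x, DifferentiableAt ℝ g x)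
    (hsmooth : ∀ w₁ w₂, ‖gradient g w₁ - gradient g w₂‖ ≤ L * ‖w₁ - w₂‖)
    (x v : E) :
    g (x + v) ≤ g x + ⟪gradient g x, v⟫ + L * ‖v‖ ^ 2 := by
  set φ : ℝ → ℝ := fun s => g (x + s • v) - s * ⟪gradient g x, v⟫ with hφ
  have hderiv : ∀ s : ℝ, HasDerivAt φ
      (⟪gradient g (x + s • v), v⟫ - ⟪gradient g x, v⟫) s := by
    intro s
    have hline : HasDerivAt (fun s : ℝ => x + s • v) v s := by
      simpa using ((hasDerivAt_id s).smul_const v).const_add x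
    have hcomp : HasDerivAt (fun s : ℝ => g (x + s • v))
        (fderiv ℝ g (x + s • v) v) s :=
      (hdiff (x + s • v)).hasFDerivAt.comp_hasDerivAt s hline
    rw [fderiv_apply_eq_inner_gradient] at hcomp
    exact hcomp.sub (hasDerivAt_mul_const _)
  have hbd : ∀ s ∈ Set.Icc (0 : ℝ) 1,
      ‖⟪gradient g (x + s • v), v⟫ - ⟪gradient g x, v⟫‖ ≤ L * ‖v‖ ^ 2 := by
    intro s hs
    have h1 : ⟪gradient g (x + s • v), v⟫ - ⟪gradient g x, v⟫
        = ⟪gradient g (x + s • v) - gradient g x, v⟫ := by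
      rw [inner_sub_left]
    rw [h1]
    calc ‖⟪gradient g (x + s • v) - gradient g x, v⟫‖
        ≤ ‖gradient g (x + s • v) - gradient g x‖ * ‖v‖ := norm_inner_le_norm _ _
      _ ≤ (L * ‖x + s • v - x‖) * ‖v‖ := by
          gcongr; exact hsmooth _ _
      _ ≤ L * ‖v‖ ^ 2 := by
          have : ‖x + s • v - x‖ = s * ‖v‖ := by
            rw [add_sub_cancel_left, norm_smul, Real.norm_eq_abs, abs_of_nonneg hs.1]
          rw [this]
          have := norm_nonneg v
          nlinarith [hs.1, hs.2,
            mul_nonneg (mul_nonneg hL (sub_nonneg.2 hs.2)) (mul_self_nonneg ‖v‖)]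
  have key : ‖φ 1 - φ 0‖ ≤ (L * ‖v‖ ^ 2) * ‖(1 : ℝ) - 0‖ := by
    refine Convex.norm_image_sub_le_of_norm_hasDerivWithin_le
      (f' := fun s => ⟪gradient g (x + s • v), v⟫ - ⟪gradient g x, v⟫)
      (fun s _ => (hderiv s).hasDerivWithinAt) hbd (convex_Icc 0 1) ?_ ?_
    · exact Set.mem_Icc.2 ⟨le_refl 0, zero_le_one⟩
    · exact Set.mem_Icc.2 ⟨zero_le_one, le_refl 1⟩
  have hφ1 : φ 1 = g (x + v) - ⟪gradient g x, v⟫ := by simp [hφ]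
  have hφ0 : φ 0 = g x := by simp [hφ]
  rw [hφ1, hφ0] at key
  have := (abs_le.1 (by simpa [Real.norm_eq_abs] using key)).2
  rw [fderiv_apply_eq_inner_gradient] at this
  linarith

/-- Gradient descent with step sizes `η_t = 1/(μ t)` on an `L`-smooth function
satisfying the PL inequality converges at rate `G²L/(T μ²)`. -/
theorem stmt5 {p : ℕ} (g : EuclideanSpace ℝ (Fin p) → ℝ) (μ L G gstar : ℝ)
    (hμ : 0 < μ) (hL : 0 < L) (hG : 0 ≤ G)
    (hglb : IsGLB (Set.range g) gstar)
    (hsmooth : ∀ w₁ w₂, ‖gradient g w₁ - gradient g w₂‖ ≤ L * ‖w₁ - w₂‖)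
    (hPL : ∀ w, μ * (g w - gstar) ≤ (1 / 2) * ‖gradient g w‖ ^ 2)
    (w : ℕ → EuclideanSpace ℝ (Fin p))
    (hupd : ∀ t : ℕ, 1 ≤ t → w (t + 1) = w t - (1 / (μ * t)) • gradient g (w t))
    (hGbd : ∀ t, ‖gradient g (w t)‖ ≤ G)
    (T : ℕ) (hT : 1 ≤ T) :
    g (w (T + 1)) - gstar ≤ G ^ 2 * L / (T * μ ^ 2) := by
  have hdiff : ∀ x, DifferentiableAt ℝ g x :=
    diff_of_PL g μ L gstar hμ hL hglb hsmooth hPL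
  have hge : ∀ y, gstar ≤ g y := fun y => hglb.1 (Set.mem_range_self y)
  set C : ℝ := G ^ 2 * L / μ ^ 2 with hCdef
  have hCnn : 0 ≤ C := by positivity
  -- recurrence
  have hrec : ∀ t : ℕ, 1 ≤ t →
      g (w (t + 1)) - gstar ≤ (1 - 2 / (t : ℝ)) * (g (w t) - gstar) + C / (t : ℝ) ^ 2 := by
    intro t ht
    have htR : (1 : ℝ) ≤ (t : ℝ) := by exact_mod_cast ht
    have htpos : (0 : ℝ) < t := by linarith
    set η : ℝ := 1 / (μ * t) with hη
    have hηpos : 0 < η := by rw [hη]; positivity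
    have hupdt := hupd t ht
    have hwt : w (t + 1) = w t + (-(η • gradient g (w t))) := by
      rw [hupdt, sub_eq_add_neg, hη]
    have hdesc := descent_lemma g L hL.le hdiff hsmooth (w t) (-(η • gradient g (w t)))
    rw [← hwt] at hdesc
    have hip : ⟪gradient g (w t), -(η • gradient g (w t))⟫
        = -(η * ‖gradient g (w t)‖ ^ 2) := by
      rw [inner_neg_right, real_inner_smul_right, real_inner_self_eq_norm_sq]
    have hnv : ‖-(η • gradient g (w t))‖ ^ 2 = η ^ 2 * ‖gradient g (w t)‖ ^ 2 := by
      rw [norm_neg, norm_smul, Real.norm_eq_abs, abs_of_pos hηpos, mul_pow]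
    rw [hip, hnv] at hdesc
    have hPLt := hPL (w t)
    have hGt := hGbd t
    have hgnn := norm_nonneg (gradient g (w t))
    -- -η‖∇‖² ≤ -(2/t)(g wt - gstar)
    have h1 : -(η * ‖gradient g (w t)‖ ^ 2) ≤ -(2 / (t : ℝ)) * (g (w t) - gstar) := by
      have : 2 * μ * (g (w t) - gstar) ≤ ‖gradient g (w t)‖ ^ 2 := by linarith
      have hcalc : η * (2 * μ * (g (w t) - gstar)) = (2 / (t : ℝ)) * (g (w t) - gstar) := by
        rw [hη]; field_simp
      nlinarith [mul_le_mul_of_nonneg_left this hηpos.le]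
    -- L η² ‖∇‖² ≤ C / t²
    have h2 : L * (η ^ 2 * ‖gradient g (w t)‖ ^ 2) ≤ C / (t : ℝ) ^ 2 := by
      have hg2 : ‖gradient g (w t)‖ ^ 2 ≤ G ^ 2 := by nlinarith
      have hηeq : η ^ 2 = 1 / (μ ^ 2 * (t : ℝ) ^ 2) := by rw [hη]; field_simp
      have hmono : L * (1 / (μ ^ 2 * (t : ℝ) ^ 2) * ‖gradient g (w t)‖ ^ 2)
          ≤ L * (1 / (μ ^ 2 * (t : ℝ) ^ 2) * G ^ 2) := by gcongr
      have heq : C / (t : ℝ) ^ 2 = L * (1 / (μ ^ 2 * (t : ℝ) ^ 2) * G ^ 2) := by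
        rw [hCdef]; field_simp
      rw [hηeq, heq]
      exact hmono
    linarith
  -- induction
  have hmain : ∀ t : ℕ, 1 ≤ t → g (w (t + 1)) - gstar ≤ C / (t : ℝ) := by
    intro t ht
    induction t, ht using Nat.le_induction with
    | base =>
      have := hrec 1 le_rfl
      simp only [Nat.cast_one] at this ⊢
      have h0 := hge (w 1)
      norm_num at this ⊢
      linarith
    | succ n hn ih =>
      have hih := ih
      have hnR : (1 : ℝ) ≤ (n : ℝ) := by exact_mod_cast hn
      have hnpos : (0 : ℝ) < n := by linarith
      have hrecn := hrec (n + 1) (by omega)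
      have hcast : ((n + 1 : ℕ) : ℝ) = (n : ℝ) + 1 := by push_cast; ring
      rw [hcast] at hrecn
      rw [hcast]
      have hcoef : (0 : ℝ) ≤ 1 - 2 / ((n : ℝ) + 1) := by
        rw [sub_nonneg, div_le_one (by linarith)]; linarith
      have hDnn : 0 ≤ g (w (n + 1)) - gstar := by linarith [hge (w (n + 1))]
      have step1 : (1 - 2 / ((n : ℝ) + 1)) * (g (w (n + 1)) - gstar)
          ≤ (1 - 2 / ((n : ℝ) + 1)) * (C / (n : ℝ)) :=
        mul_le_mul_of_nonneg_left hih hcoef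
      have harith : (1 - 2 / ((n : ℝ) + 1)) * (C / (n : ℝ)) + C / ((n : ℝ) + 1) ^ 2
          ≤ C / ((n : ℝ) + 1) := by
        have hkey : (1 - 2 / ((n : ℝ) + 1)) * (C / (n : ℝ)) + C / ((n : ℝ) + 1) ^ 2
            = C / ((n : ℝ) + 1) - C / ((n : ℝ) * ((n : ℝ) + 1) ^ 2) := by
          field_simp
          ring
        rw [hkey]
        have : 0 ≤ C / ((n : ℝ) * ((n : ℝ) + 1) ^ 2) := by positivity
        linarith
      calc g (w (n + 1 + 1)) - gstar
          ≤ (1 - 2 / ((n : ℝ) + 1)) * (g (w (n + 1)) - gstar) + C / ((n : ℝ) + 1) ^ 2 := hrecn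
        _ ≤ (1 - 2 / ((n : ℝ) + 1)) * (C / (n : ℝ)) + C / ((n : ℝ) + 1) ^ 2 := by linarith
        _ ≤ C / ((n : ℝ) + 1) := harith
  have hfin := hmain T hT
  have hTR : (1 : ℝ) ≤ (T : ℝ) := by exact_mod_cast hT
  have hTpos : (0 : ℝ) < T := by linarith
  have heq : C / (T : ℝ) = G ^ 2 * L / ((T : ℝ) * μ ^ 2) := by
    rw [hCdef, div_div, mul_comm (μ ^ 2)]
  rw [heq] at hfin
  exact hfin
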